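/- Let V and W be real vector spaces whose topologies are generated by increasing, point-separating sequences of seminorms (μ_n)_{n∈ℕ} and (ν_n)_{n∈ℕ} respectively, fix r, b ∈ ℕ, and let T_{r,b}L(V,W) be the space of continuous linear maps f : V → W with ‖f‖_n := sup{ν_n(f(v)) : μ_{n+r}(v) ≤ 1} < ∞ for all n ≥ b, equipped with the topology generated by the seminorms ‖·‖_n, n ≥ b. Then: (a) this topology on T_{r,b}L(V,W) is finer than the compact-open topology (the topology of uniform convergence on compact subsets of V); and (b) the evaluation map T_{r,b}L(V,W) × V → W, (A,v) ↦ A(v), is jointly continuous. -/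

import Mathlib

/-- The set of values `ν n (f v)` for `v` in the unit ball of the seminorm `μ (n+r)`;
its supremum is the operator "norm" `‖f‖_n` of a tame linear map. -/
def tameNormSet {V W : Type*} [AddCommGroup V] [Module ℝ V] [TopologicalSpace V]
    [AddCommGroup W] [Module ℝ W] [TopologicalSpace W]
    (μ : SeminormFamily ℝ V ℕ) (ν : SeminormFamily ℝ W ℕ) (r : ℕ)
    (f : V →L[ℝ] W) (n : ℕ) : Set ℝ :=
  (fun v => ν n (f v)) '' {v : V | μ (n + r) v ≤ 1}

/-- `‖f‖_n = sup {ν n (f v) | μ (n+r) v ≤ 1}`. -/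
noncomputable def tameOpNorm {V W : Type*} [AddCommGroup V] [Module ℝ V]
    [TopologicalSpace V] [AddCommGroup W] [Module ℝ W] [TopologicalSpace W]
    (μ : SeminormFamily ℝ V ℕ) (ν : SeminormFamily ℝ W ℕ) (r : ℕ)
    (f : V →L[ℝ] W) (n : ℕ) : ℝ :=
  sSup (tameNormSet μ ν r f n)

/-- `T_{r,b}L(V,W)`: the continuous linear maps `f : V → W` with `‖f‖_n < ∞`
(i.e. the relevant set of values is bounded above) for all `n ≥ b`. -/
def TameLinearMaps {V W : Type*} [AddCommGroup V] [Module ℝ V] [TopologicalSpace V]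
    [AddCommGroup W] [Module ℝ W] [TopologicalSpace W]
    (μ : SeminormFamily ℝ V ℕ) (ν : SeminormFamily ℝ W ℕ) (r b : ℕ) : Type _ :=
  {f : V →L[ℝ] W // ∀ n, b ≤ n → BddAbove (tameNormSet μ ν r f n)}

section Aux

variable {V W : Type*} [AddCommGroup V] [Module ℝ V] [TopologicalSpace V]
    [AddCommGroup W] [Module ℝ W] [TopologicalSpace W]
    (μ : SeminormFamily ℝ V ℕ) (ν : SeminormFamily ℝ W ℕ) (r : ℕ)

lemma zero_mem_tns (f : V →L[ℝ] W) (n : ℕ) : (0 : ℝ) ∈ tameNormSet μ ν r f n :=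
  ⟨0, by simp, by simp⟩

lemma tameOpNorm_nonneg (f : V →L[ℝ] W) (n : ℕ)
    (h : BddAbove (tameNormSet μ ν r f n)) : 0 ≤ tameOpNorm μ ν r f n :=
  le_csSup h (zero_mem_tns μ ν r f n)

lemma tameOpNorm_zero (n : ℕ) : tameOpNorm μ ν r 0 n = 0 := by
  have hset : tameNormSet μ ν r (0 : V →L[ℝ] W) n = {0} := by
    ext x
    constructor
    · rintro ⟨v, hv, rfl⟩; simp
    · rintro rfl; exact zero_mem_tns μ ν r 0 n
  rw [tameOpNorm, hset, csSup_singleton]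

lemma apply_le_tameOpNorm (f : V →L[ℝ] W) (n : ℕ)
    (h : BddAbove (tameNormSet μ ν r f n)) (v : V) (hv : μ (n + r) v ≤ 1) :
    ν n (f v) ≤ tameOpNorm μ ν r f n :=
  le_csSup h ⟨v, hv, rfl⟩

lemma apply_le_tameOpNorm_mul (f : V →L[ℝ] W) (n : ℕ)
    (h : BddAbove (tameNormSet μ ν r f n)) (v : V) :
    ν n (f v) ≤ tameOpNorm μ ν r f n * μ (n + r) v := by
  have hN : 0 ≤ tameOpNorm μ ν r f n := tameOpNorm_nonneg μ ν r f n h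
  rcases eq_or_lt_of_le (apply_nonneg (μ (n + r)) v) with h0 | h0
  · rw [← h0, mul_zero]
    by_contra hlt
    push_neg at hlt
    set t : ℝ := (tameOpNorm μ ν r f n + 1) / ν n (f v) with ht
    have htpos : 0 < t := div_pos (by linarith) hlt
    have hball : μ (n + r) (t • v) ≤ 1 := by
      rw [map_smul_eq_mul, ← h0, mul_zero]; norm_num
    have h2 := apply_le_tameOpNorm μ ν r f n h (t • v) hball
    rw [map_smul, map_smul_eq_mul, Real.norm_eq_abs, abs_of_pos htpos, ht,
      div_mul_cancel₀ _ (ne_of_gt hlt)] at h2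
    linarith
  · have hv : μ (n + r) ((μ (n + r) v)⁻¹ • v) ≤ 1 := by
      rw [map_smul_eq_mul, Real.norm_eq_abs, abs_of_pos (inv_pos.mpr h0),
        inv_mul_cancel₀ (ne_of_gt h0)]
    have h2 := apply_le_tameOpNorm μ ν r f n h _ hv
    rw [map_smul, map_smul_eq_mul, Real.norm_eq_abs, abs_of_pos (inv_pos.mpr h0)] at h2
    have h3 := mul_le_mul_of_nonneg_right h2 h0.le
    rw [mul_comm ((μ (n + r) v)⁻¹) (ν n (f v)), mul_assoc,
      inv_mul_cancel₀ (ne_of_gt h0), mul_one] at h3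
    exact h3

lemma bddAbove_tns_sub [IsTopologicalAddGroup W] (f g : V →L[ℝ] W) (n : ℕ)
    (hf : BddAbove (tameNormSet μ ν r f n)) (hg : BddAbove (tameNormSet μ ν r g n)) :
    BddAbove (tameNormSet μ ν r (f - g) n) := by
  refine ⟨tameOpNorm μ ν r f n + tameOpNorm μ ν r g n, ?_⟩
  rintro x ⟨v, hv, rfl⟩
  simp only [ContinuousLinearMap.sub_apply]
  calc ν n (f v - g v) ≤ ν n (f v) + ν n (g v) := map_sub_le_add _ _ _
    _ ≤ _ := add_le_add (apply_le_tameOpNorm μ ν r f n hf v hv)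
        (apply_le_tameOpNorm μ ν r g n hg v hv)

lemma seminorm_mono {E : Type*} [AddCommGroup E] [Module ℝ E]
    (p : SeminormFamily ℝ E ℕ) (hp : ∀ n v, p n v ≤ p (n + 1) v)
    {n m : ℕ} (hnm : n ≤ m) (v : E) : p n v ≤ p m v := by
  induction m, hnm using Nat.le_induction with
  | base => exact le_rfl
  | succ m hm ih => exact ih.trans (hp m v)

lemma exists_single_ball {E : Type*} [AddCommGroup E] [Module ℝ E] [TopologicalSpace E]
    (p : SeminormFamily ℝ E ℕ) (hp : WithSeminorms p)
    (hmono : ∀ n v, p n v ≤ p (n + 1) v) (b : ℕ) {x : E} {O : Set E} (hO : O ∈ nhds x) :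
    ∃ n, b ≤ n ∧ ∃ ε : ℝ, 0 < ε ∧ ∀ w, p n (w - x) < ε → w ∈ O := by
  obtain ⟨s, ε, hε, hball⟩ := (hp.mem_nhds_iff x O).mp hO
  refine ⟨max b (s.sup id), le_max_left _ _, ε, hε, fun w hw => hball ?_⟩
  rw [Seminorm.mem_ball]
  refine Seminorm.finset_sup_apply_lt hε fun i hi => lt_of_le_of_lt ?_ hw
  exact seminorm_mono p hmono (le_trans (Finset.le_sup (f := id) hi) (le_max_right b _)) _

end Aux

/-- Let `V`, `W` be real vector spaces whose topologies are generated by increasing,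
point-separating sequences of seminorms `(μ n)`, `(ν n)`, and fix `r b : ℕ`.  Equip
`T_{r,b}L(V,W)` with the topology generated by the seminorms `‖·‖_n`, `n ≥ b` (i.e.
generated by all balls `{f | ‖f - g‖_n < δ}`).  Then (a) this topology is finer than
the compact-open topology, and (b) the evaluation map `(A, v) ↦ A v` is jointly
continuous on `T_{r,b}L(V,W) × V`. -/
theorem stmt15 (V W : Type*)
    [AddCommGroup V] [Module ℝ V] [TopologicalSpace V]
    [AddCommGroup W] [Module ℝ W] [TopologicalSpace W] [IsTopologicalAddGroup W]
    (μ : SeminormFamily ℝ V ℕ) (ν : SeminormFamily ℝ W ℕ)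
    (hμtop : WithSeminorms μ) (hνtop : WithSeminorms ν)
    (hμmono : ∀ (n : ℕ) (v : V), μ n v ≤ μ (n + 1) v)
    (hνmono : ∀ (n : ℕ) (w : W), ν n w ≤ ν (n + 1) w)
    (hμsep : ∀ v : V, (∀ n, μ n v = 0) → v = 0)
    (hνsep : ∀ w : W, (∀ n, ν n w = 0) → w = 0)
    (r b : ℕ)
    (t : TopologicalSpace (TameLinearMaps μ ν r b))
    (ht : t = TopologicalSpace.generateFrom
      {U : Set (TameLinearMaps μ ν r b) | ∃ g : TameLinearMaps μ ν r b,
        ∃ n, b ≤ n ∧ ∃ δ : ℝ, 0 < δ ∧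
          U = {f : TameLinearMaps μ ν r b | tameOpNorm μ ν r (f.1 - g.1) n < δ}}) :
    t ≤ TopologicalSpace.generateFrom
      {U : Set (TameLinearMaps μ ν r b) | ∃ K : Set V, IsCompact K ∧
        ∃ O : Set W, IsOpen O ∧
          U = {f : TameLinearMaps μ ν r b | ∀ v ∈ K, f.1 v ∈ O}} ∧
    @Continuous (TameLinearMaps μ ν r b × V) W
      (@instTopologicalSpaceProd (TameLinearMaps μ ν r b) V t _) _
      (fun p => p.1.1 p.2) := by
  subst ht
  letI tG : TopologicalSpace (TameLinearMaps μ ν r b) :=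
    TopologicalSpace.generateFrom
      {U : Set (TameLinearMaps μ ν r b) | ∃ g : TameLinearMaps μ ν r b,
        ∃ n, b ≤ n ∧ ∃ δ : ℝ, 0 < δ ∧
          U = {f : TameLinearMaps μ ν r b | tameOpNorm μ ν r (f.1 - g.1) n < δ}}
  have hopen_ball : ∀ (g : TameLinearMaps μ ν r b) (n : ℕ), b ≤ n → ∀ δ : ℝ, 0 < δ →
      IsOpen {f : TameLinearMaps μ ν r b | tameOpNorm μ ν r (f.1 - g.1) n < δ} :=
    fun g n hn δ hδ =>
      TopologicalSpace.GenerateOpen.basic _ ⟨g, n, hn, δ, hδ, rfl⟩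
  have hmem_ball : ∀ (g : TameLinearMaps μ ν r b) (n : ℕ) (δ : ℝ), 0 < δ →
      g ∈ {f : TameLinearMaps μ ν r b | tameOpNorm μ ν r (f.1 - g.1) n < δ} := by
    intro g n δ hδ
    show tameOpNorm μ ν r (g.1 - g.1) n < δ
    rw [sub_self, tameOpNorm_zero]
    exact hδ
  constructor
  · -- (a) finer than compact-open
    rw [TopologicalSpace.le_generateFrom_iff_subset_isOpen]
    rintro S ⟨K, hK, O, hO, rfl⟩
    rw [Set.mem_setOf_eq, isOpen_iff_forall_mem_open]
    intro f₀ hf₀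
    have hchoice : ∀ v : V, ∃ n ε, b ≤ n ∧ 0 < ε ∧
        (v ∈ K → ∀ w, ν n (w - f₀.1 v) < ε → w ∈ O) := by
      intro v
      by_cases hv : v ∈ K
      · obtain ⟨n, hbn, ε, hε, hball⟩ :=
          exists_single_ball ν hνtop hνmono b (hO.mem_nhds (hf₀ v hv))
        exact ⟨n, ε, hbn, hε, fun _ => hball⟩
      · exact ⟨b, 1, le_rfl, one_pos, fun h => absurd h hv⟩
    choose nn ee hbn hee hball using hchoice
    set U : V → Set V := fun v =>
      {u | μ (nn v + r) u < μ (nn v + r) v + 1 ∧ ν (nn v) (f₀.1 u - f₀.1 v) < ee v / 3}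
      with hU
    have hUopen : ∀ v, IsOpen (U v) := by
      intro v
      have h1 : Continuous fun u : V => μ (nn v + r) u := hμtop.continuous_seminorm _
      have h2 : Continuous fun u : V => ν (nn v) (f₀.1 u - f₀.1 v) :=
        (hνtop.continuous_seminorm _).comp (f₀.1.continuous.sub continuous_const)
      exact (isOpen_lt h1 continuous_const).inter (isOpen_lt h2 continuous_const)
    have hUmem : ∀ v, v ∈ U v := by
      intro v
      refine ⟨lt_add_one _, ?_⟩
      show ν (nn v) (f₀.1 v - f₀.1 v) < ee v / 3
      rw [sub_self, map_zero]
      have := hee v; positivity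
    obtain ⟨s, hsK, hsfin, hcover⟩ := hK.elim_finite_subcover_image
      (fun v (_ : v ∈ K) => hUopen v)
      (fun v hv => Set.mem_biUnion hv (hUmem v))
    refine ⟨⋂ v ∈ s, {f : TameLinearMaps μ ν r b |
        tameOpNorm μ ν r (f.1 - f₀.1) (nn v) < ee v / (3 * (μ (nn v + r) v + 1))},
        ?_, ?_, ?_⟩
    · -- contained in S
      intro f hf
      intro u huK
      obtain ⟨v, hvs, hvU⟩ := Set.mem_iUnion₂.mp (hcover huK)
      have hvK : v ∈ K := hsK hvs
      have hfball := Set.mem_iInter₂.mp hf v hvs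
      have hC : (0:ℝ) < μ (nn v + r) v + 1 := by positivity
      have hBdd := bddAbove_tns_sub μ ν r f.1 f₀.1 (nn v)
        (f.2 _ (hbn v)) (f₀.2 _ (hbn v))
      have hN0 : 0 ≤ tameOpNorm μ ν r (f.1 - f₀.1) (nn v) :=
        tameOpNorm_nonneg μ ν r _ _ hBdd
      have h1 : ν (nn v) (f.1 u - f₀.1 u)
          ≤ tameOpNorm μ ν r (f.1 - f₀.1) (nn v) * μ (nn v + r) u := by
        have := apply_le_tameOpNorm_mul μ ν r (f.1 - f₀.1) (nn v) hBdd u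
        rwa [ContinuousLinearMap.sub_apply] at this
      have h2 : tameOpNorm μ ν r (f.1 - f₀.1) (nn v) * μ (nn v + r) u
          ≤ tameOpNorm μ ν r (f.1 - f₀.1) (nn v) * (μ (nn v + r) v + 1) :=
        mul_le_mul_of_nonneg_left hvU.1.le hN0
      have h3 : tameOpNorm μ ν r (f.1 - f₀.1) (nn v) * (μ (nn v + r) v + 1)
          < ee v / (3 * (μ (nn v + r) v + 1)) * (μ (nn v + r) v + 1) :=
        mul_lt_mul_of_pos_right hfball hC
      have h4 : ee v / (3 * (μ (nn v + r) v + 1)) * (μ (nn v + r) v + 1) = ee v / 3 := by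
        field_simp
      have htri : ν (nn v) (f.1 u - f₀.1 v)
          ≤ ν (nn v) (f.1 u - f₀.1 u) + ν (nn v) (f₀.1 u - f₀.1 v) := by
        have := map_add_le_add (ν (nn v)) (f.1 u - f₀.1 u) (f₀.1 u - f₀.1 v)
        rwa [sub_add_sub_cancel] at this
      have h5 := hvU.2
      refine hball v hvK (f.1 u) ?_
      have hee3 : ee v / 3 + ee v / 3 < ee v := by
        have := hee v; linarith
      linarith
    · -- open
      exact hsfin.isOpen_biInter fun v hvs =>
        hopen_ball f₀ (nn v) (hbn v) _ (by have := hee v; positivity)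
    · -- f₀ in the set
      exact Set.mem_iInter₂.mpr fun v hvs =>
        hmem_ball f₀ (nn v) _ (by have := hee v; positivity)
  · -- (b) joint continuity of evaluation
    rw [continuous_iff_continuousAt]
    rintro ⟨A₀, v₀⟩
    rw [ContinuousAt, hνtop.tendsto_nhds]
    intro n ε hε
    set m := max n b with hm
    have hbm : b ≤ m := le_max_right _ _
    have hnm : n ≤ m := le_max_left _ _
    set C : ℝ := μ (m + r) v₀ + 1 with hCdef
    have hC : (0:ℝ) < C := by rw [hCdef]; positivity
    set δ : ℝ := ε / (2 * C) with hδdef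
    have hδ : 0 < δ := by rw [hδdef]; positivity
    set P : Set (TameLinearMaps μ ν r b) :=
      {f | tameOpNorm μ ν r (f.1 - A₀.1) m < δ} with hP
    set Q : Set V := {v | μ (m + r) v < C ∧ ν m (A₀.1 v - A₀.1 v₀) < ε / 2} with hQ
    have hPnhds : P ∈ nhds A₀ :=
      (hopen_ball A₀ m hbm δ hδ).mem_nhds (hmem_ball A₀ m δ hδ)
    have hQnhds : Q ∈ nhds v₀ := by
      have hopenQ : IsOpen Q := by
        have h1 : Continuous fun v : V => μ (m + r) v := hμtop.continuous_seminorm _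
        have h2 : Continuous fun v : V => ν m (A₀.1 v - A₀.1 v₀) :=
          (hνtop.continuous_seminorm _).comp (A₀.1.continuous.sub continuous_const)
        exact (isOpen_lt h1 continuous_const).inter (isOpen_lt h2 continuous_const)
      refine hopenQ.mem_nhds ⟨lt_add_one _, ?_⟩
      show ν m (A₀.1 v₀ - A₀.1 v₀) < ε / 2
      rw [sub_self, map_zero]
      positivity
    have hPQ : P ×ˢ Q ∈ nhds (A₀, v₀) := prod_mem_nhds hPnhds hQnhds
    filter_upwards [hPQ]
    rintro ⟨A, v⟩ ⟨hA, hv⟩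
    have hBdd := bddAbove_tns_sub μ ν r A.1 A₀.1 m (A.2 _ hbm) (A₀.2 _ hbm)
    have hN0 : 0 ≤ tameOpNorm μ ν r (A.1 - A₀.1) m := tameOpNorm_nonneg μ ν r _ _ hBdd
    have h1 : ν m (A.1 v - A₀.1 v) ≤ tameOpNorm μ ν r (A.1 - A₀.1) m * μ (m + r) v := by
      have := apply_le_tameOpNorm_mul μ ν r (A.1 - A₀.1) m hBdd v
      rwa [ContinuousLinearMap.sub_apply] at this
    have h2 : tameOpNorm μ ν r (A.1 - A₀.1) m * μ (m + r) v
        ≤ tameOpNorm μ ν r (A.1 - A₀.1) m * C :=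
      mul_le_mul_of_nonneg_left hv.1.le hN0
    have h3 : tameOpNorm μ ν r (A.1 - A₀.1) m * C < δ * C := mul_lt_mul_of_pos_right hA hC
    have h4 : δ * C = ε / 2 := by
      rw [hδdef]; field_simp
    have h5 : ν m (A₀.1 v - A₀.1 v₀) < ε / 2 := hv.2
    have htri : ν m (A.1 v - A₀.1 v₀)
        ≤ ν m (A.1 v - A₀.1 v) + ν m (A₀.1 v - A₀.1 v₀) := by
      have := map_add_le_add (ν m) (A.1 v - A₀.1 v) (A₀.1 v - A₀.1 v₀)
      rwa [sub_add_sub_cancel] at this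
    have hmono' : ν n (A.1 v - A₀.1 v₀) ≤ ν m (A.1 v - A₀.1 v₀) :=
      seminorm_mono ν hνmono hnm _
    show ν n (A.1 v - A₀.1 v₀) < ε
    calc ν n (A.1 v - A₀.1 v₀) ≤ ν m (A.1 v - A₀.1 v₀) := hmono'
      _ ≤ ν m (A.1 v - A₀.1 v) + ν m (A₀.1 v - A₀.1 v₀) := htri
      _ < ε / 2 + ε / 2 :=
          add_lt_add_of_lt_of_lt (h1.trans_lt (h2.trans_lt (h3.trans_le h4.le))) h5
      _ = ε := by ring
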